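/- Let k ≥ 2 be an integer, r ∈ (0,1), and x ∈ [1/k, 1]. For every probability distribution P = (p_1,…,p_k) on [k] with H(P) = H(Q_x), one has Σ_{i=1}^k p_i^r ≤ x^r + (k−1)·((1−x)/(k−1))^r. Moreover, equality holds only if P equals Q_x up to a permutation of the coordinates. -/

import Mathlib

open scoped BigOperators

/-- Shannon entropy of a distribution on `[k]` (natural logarithm, `0·log 0 = 0`). -/
noncomputable def shannonEnt (k : ℕ) (P : Fin k → ℝ) : ℝ :=
  -∑ i, P i * Real.log (P i)

/-- The distribution `Q_x = (x, (1-x)/(k-1), …, (1-x)/(k-1))` on `[k]`. -/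
noncomputable def Qdist (k : ℕ) (x : ℝ) : Fin k → ℝ :=
  fun i => if (i : ℕ) = 0 then x else (1 - x) / ((k : ℝ) - 1)

open Real

namespace EntAux

noncomputable def psi (r l m t : ℝ) : ℝ := t ^ r + l * (t * Real.log t) - m * t
noncomputable def chi (r l m t : ℝ) : ℝ := r * t ^ (r - 1) + l * (Real.log t + 1) - m

lemma hasDerivAt_psi (r l m : ℝ) {t : ℝ} (ht : 0 < t) :
    HasDerivAt (psi r l m) (chi r l m t) t := by
  have h1 : HasDerivAt (fun t : ℝ => t ^ r) (r * t ^ (r - 1)) t :=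
    Real.hasDerivAt_rpow_const (Or.inl ht.ne')
  have h2 : HasDerivAt (fun t : ℝ => t * Real.log t) (Real.log t + 1) t :=
    Real.hasDerivAt_mul_log ht.ne'
  have h3 : HasDerivAt (fun t : ℝ => m * t) m t := (hasDerivAt_id t).const_mul m |>.congr_deriv (by ring)
  have := (h1.add (h2.const_mul l)).sub h3
  exact this


lemma hasDerivAt_chi (r l m : ℝ) {t : ℝ} (ht : 0 < t) :
    HasDerivAt (chi r l m) ((l - r * (1 - r) * t ^ (r - 1)) / t) t := by
  have h1 : HasDerivAt (fun t : ℝ => t ^ (r - 1)) ((r - 1) * t ^ (r - 1 - 1)) t :=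
    Real.hasDerivAt_rpow_const (Or.inl ht.ne')
  have h2 : HasDerivAt Real.log t⁻¹ t := Real.hasDerivAt_log ht.ne'
  have h : HasDerivAt (chi r l m)
      (r * ((r - 1) * t ^ (r - 1 - 1)) + l * t⁻¹) t := by
    have := ((h1.const_mul r).add ((h2.add_const 1).const_mul l)).sub_const m
    exact this
  convert h using 1
  have ht' : t ^ (r - 1 - 1) = t ^ (r - 1) / t := by
    rw [Real.rpow_sub ht, Real.rpow_one]
  rw [ht']
  field_simp
  ring

end EntAux

namespace EntAux2
open EntAux

variable {r l m : ℝ}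

/-- `t ↦ t^(r-1)` is strictly decreasing on `(0,∞)` for `r<1`. -/
lemma rpow_anti (hr1 : r < 1) {a b : ℝ} (ha : 0 < a) (hab : a < b) :
    b ^ (r - 1) < a ^ (r - 1) :=
  Real.rpow_lt_rpow_of_neg ha hab (by linarith)

/-- Once `l ≥ r(1-r)ξ^(r-1)`, `chi` is strictly increasing to the right of `ξ`. -/
lemma chi_strictMono (hr : 0 < r) (hr1 : r < 1) {ξ b : ℝ} (hξ : 0 < ξ)
    (hl : r * (1 - r) * ξ ^ (r - 1) ≤ l) (hξb : ξ ≤ b) :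
    StrictMonoOn (chi r l m) (Set.Icc ξ b) := by
  apply strictMonoOn_of_deriv_pos (convex_Icc ξ b)
  · intro z hz
    exact (hasDerivAt_chi r l m (lt_of_lt_of_le hξ hz.1)).continuousAt.continuousWithinAt
  · intro z hz
    rw [interior_Icc] at hz
    have hz0 : 0 < z := lt_trans hξ hz.1
    rw [(hasDerivAt_chi r l m hz0).deriv]
    apply div_pos _ hz0
    have : r * (1 - r) * z ^ (r - 1) < r * (1 - r) * ξ ^ (r - 1) := by
      have := rpow_anti hr1 hξ hz.1
      nlinarith [mul_pos hr (by linarith : (0:ℝ) < 1 - r)]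
    linarith

/-- `psi` is strictly increasing on `[a,b] ⊆ (0,∞)` if `chi > 0` on `(a,b)`. -/
lemma psi_strictMono (hr : 0 < r) {a b : ℝ} (ha : 0 < a)
    (h : ∀ z ∈ Set.Ioo a b, 0 < chi r l m z) :
    StrictMonoOn (psi r l m) (Set.Icc a b) := by
  apply strictMonoOn_of_deriv_pos (convex_Icc a b)
  · intro z hz
    exact (hasDerivAt_psi r l m (lt_of_lt_of_le ha hz.1)).continuousAt.continuousWithinAt
  · intro z hz
    rw [interior_Icc] at hz
    rw [(hasDerivAt_psi r l m (lt_trans ha hz.1)).deriv]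
    exact h z hz

end EntAux2

namespace EntAux3
open EntAux EntAux2

variable {r l m : ℝ}

lemma chi_contOn (hr : 0 < r) {a b : ℝ} (ha : 0 < a) :
    ContinuousOn (chi r l m) (Set.Icc a b) := fun z hz =>
  (hasDerivAt_chi r l m (lt_of_lt_of_le ha hz.1)).continuousAt.continuousWithinAt

lemma psi_contOn (hr : 0 < r) {a b : ℝ} (ha : 0 < a) :
    ContinuousOn (psi r l m) (Set.Icc a b) := fun z hz =>
  (hasDerivAt_psi r l m (lt_of_lt_of_le ha hz.1)).continuousAt.continuousWithinAt

/-- Engine: if `l ≥ r(1-r)ξ^(r-1)` for some `ξ ≤ w < x` with `chi w = 0`,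
then `psi x > psi w`. -/
lemma engine (hr : 0 < r) (hr1 : r < 1) {ξ w x : ℝ} (hξ : 0 < ξ)
    (hA : r * (1 - r) * ξ ^ (r - 1) ≤ l) (hξw : ξ ≤ w) (hwx : w < x)
    (hchiw : chi r l m w = 0) :
    psi r l m w < psi r l m x := by
  have hw : 0 < w := lt_of_lt_of_le hξ hξw
  have hmono : StrictMonoOn (chi r l m) (Set.Icc ξ x) :=
    chi_strictMono hr hr1 hξ hA (le_of_lt (lt_of_le_of_lt hξw hwx))
  have hpos : ∀ z ∈ Set.Ioo w x, 0 < chi r l m z := by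
    intro z hz
    have := hmono (Set.mem_Icc.mpr ⟨hξw, hwx.le⟩)
      (Set.mem_Icc.mpr ⟨le_trans hξw hz.1.le, hz.2.le⟩) hz.1
    rwa [hchiw] at this
  exact psi_strictMono hr hw hpos (Set.mem_Icc.mpr ⟨le_refl w, hwx.le⟩)
    (Set.mem_Icc.mpr ⟨hwx.le, le_refl x⟩) hwx

lemma psi_bound (hr : 0 < r) (hr1 : r < 1) {x y : ℝ} (hy : 0 < y) (hyx : y < x)
    (hchiy : chi r l m y = 0) (heq : psi r l m x = psi r l m y)
    (hlA : l < r * (1 - r) * y ^ (r - 1)) :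
    (0 < psi r l m y) ∧
    (∀ t, 0 ≤ t → t ≤ x → psi r l m t ≤ psi r l m x) ∧
    (∀ t, 0 ≤ t → t ≤ x → t ≠ x → t ≠ y → psi r l m t < psi r l m x) := by
  have hx0 : 0 < x := lt_trans hy hyx
  -- positivity of psi y
  have hm : m = r * y ^ (r - 1) + l * (Real.log y + 1) := by
    have := hchiy; unfold chi at this; linarith
  have hyr : y * y ^ (r - 1) = y ^ r := by
    calc y * y ^ (r - 1) = y ^ (1:ℝ) * y ^ (r - 1) := by rw [Real.rpow_one]
      _ = y ^ (1 + (r - 1)) := (Real.rpow_add hy 1 (r-1)).symm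
      _ = y ^ r := by ring_nf
  have hpsiy : psi r l m y = y * ((1 - r) * y ^ (r - 1) - l) := by
    unfold psi
    rw [hm]
    have : y ^ r = y * y ^ (r - 1) := hyr.symm
    rw [this]; ring
  have hypos : 0 < psi r l m y := by
    rw [hpsiy]
    apply mul_pos hy
    have h1 : 0 < (1 - r) * y ^ (r - 1) - r * ((1 - r) * y ^ (r - 1)) := by
      have : 0 < (1 - r) * y ^ (r - 1) :=
        mul_pos (by linarith) (Real.rpow_pos_of_pos hy _)
      nlinarith
    nlinarith
  -- claim 1 : chi > 0 on (0, y)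
  have claim1 : ∀ t ∈ Set.Ioo (0:ℝ) y, 0 < chi r l m t := by
    intro t ht
    by_contra hle
    push_neg at hle
    obtain ⟨ξ, hξmem, hξeq⟩ := exists_hasDerivAt_eq_slope (chi r l m)
      (fun z => (l - r * (1 - r) * z ^ (r - 1)) / z) ht.2 (chi_contOn hr ht.1)
      (fun z hz => hasDerivAt_chi r l m (lt_trans ht.1 hz.1))
    have hξ0 : 0 < ξ := lt_trans ht.1 hξmem.1
    have hslope : 0 ≤ (l - r * (1 - r) * ξ ^ (r - 1)) / ξ := by
      rw [hξeq, hchiy]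
      apply div_nonneg (by linarith) (by linarith [ht.2, hξmem.2])
    have hA : r * (1 - r) * ξ ^ (r - 1) ≤ l := by
      by_contra h
      push_neg at h
      have : (l - r * (1 - r) * ξ ^ (r - 1)) / ξ < 0 :=
        div_neg_of_neg_of_pos (by linarith) hξ0
      linarith
    have := engine hr hr1 hξ0 hA hξmem.2.le hyx hchiy
    rw [heq] at this
    exact lt_irrefl _ this
  -- claim 2 : psi < psi y on (y, x)
  have claim2 : ∀ t ∈ Set.Ioo y x, psi r l m t < psi r l m y := by
    intro t ht
    by_contra hle
    push_neg at hle
    -- find an interior max point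
    obtain ⟨t₀, ht₀mem, ht₀max⟩ := isCompact_Icc.exists_isMaxOn
      (Set.nonempty_Icc.mpr hyx.le) (psi_contOn hr hy)
    have htmem : t ∈ Set.Icc y x := ⟨ht.1.le, ht.2.le⟩
    -- produce an interior max point t*
    have hexists : ∃ t₁ ∈ Set.Ioo y x, IsMaxOn (psi r l m) (Set.Icc y x) t₁ := by
      rcases eq_or_ne t₀ y with h0 | h0y
      · refine ⟨t, ht, ?_⟩
        intro z hz
        have h1 := ht₀max htmem
        rw [h0] at h1
        have : psi r l m z ≤ psi r l m t₀ := ht₀max hz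
        rw [h0] at this
        simp only [Set.mem_setOf_eq]
        linarith
      · rcases eq_or_ne t₀ x with h0x | h0x
        · refine ⟨t, ht, ?_⟩
          intro z hz
          have h1 := ht₀max htmem
          rw [h0x, heq] at h1
          have : psi r l m z ≤ psi r l m t₀ := ht₀max hz
          rw [h0x, heq] at this
          simp only [Set.mem_setOf_eq]
          linarith
        · exact ⟨t₀, ⟨lt_of_le_of_ne ht₀mem.1 (Ne.symm h0y), lt_of_le_of_ne ht₀mem.2 h0x⟩, ht₀max⟩
    obtain ⟨t₁, ht₁mem, ht₁max⟩ := hexists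
    have ht₁0 : 0 < t₁ := lt_trans hy ht₁mem.1
    -- Fermat
    have hloc : IsLocalMax (psi r l m) t₁ :=
      ht₁max.isLocalMax (Icc_mem_nhds ht₁mem.1 ht₁mem.2)
    have hchit₁ : chi r l m t₁ = 0 := by
      have := hloc.deriv_eq_zero
      rwa [(hasDerivAt_psi r l m ht₁0).deriv] at this
    -- MVT on [y, t₁]
    obtain ⟨ξ, hξmem, hξeq⟩ := exists_hasDerivAt_eq_slope (chi r l m)
      (fun z => (l - r * (1 - r) * z ^ (r - 1)) / z) ht₁mem.1 (chi_contOn hr hy)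
      (fun z hz => hasDerivAt_chi r l m (lt_trans hy hz.1))
    have hξ0 : 0 < ξ := lt_trans hy hξmem.1
    have hA : r * (1 - r) * ξ ^ (r - 1) ≤ l := by
      have : (l - r * (1 - r) * ξ ^ (r - 1)) / ξ = 0 := by
        rw [hξeq, hchit₁, hchiy]; simp
      have h2 : l - r * (1 - r) * ξ ^ (r - 1) = 0 := by
        rcases div_eq_zero_iff.mp this with h | h
        · exact h
        · exact absurd h hξ0.ne'
      linarith
    have := engine hr hr1 hξ0 hA hξmem.2.le ht₁mem.2 hchit₁
    have hge : psi r l m x ≤ psi r l m t₁ := ht₁max ⟨hyx.le, le_refl x⟩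
    linarith
  -- assemble
  have hpsi0 : psi r l m 0 = 0 := by
    unfold psi
    rw [Real.zero_rpow hr.ne']
    simp
  have hstrict : ∀ t, 0 ≤ t → t ≤ x → t ≠ x → t ≠ y → psi r l m t < psi r l m x := by
    intro t ht0 htx htnex htney
    rcases eq_or_lt_of_le ht0 with h0 | h0
    · rw [← h0, hpsi0, heq]; exact hypos
    rcases lt_trichotomy t y with hty | hty | hty
    · have hmono := psi_strictMono (l := l) (m := m) hr h0 (fun z hz => claim1 z ⟨lt_trans h0 hz.1, hz.2⟩)
      have := hmono (Set.mem_Icc.mpr ⟨le_refl t, hty.le⟩) (Set.mem_Icc.mpr ⟨hty.le, le_refl y⟩) hty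
      rw [heq]; exact this
    · exact absurd hty htney
    · have := claim2 t ⟨hty, lt_of_le_of_ne htx htnex⟩
      rw [heq]; exact this
  refine ⟨hypos, ?_, hstrict⟩
  intro t ht0 htx
  rcases eq_or_ne t x with h | h
  · rw [h]
  rcases eq_or_ne t y with h' | h'
  · rw [h', ← heq]
  exact (hstrict t ht0 htx h h').le

end EntAux3

namespace EntAux4
open EntAux EntAux2 EntAux3

/-- Existence of tangent multipliers. -/
lemma exists_lm {r : ℝ} (hr : 0 < r) (hr1 : r < 1) {x y : ℝ} (hy : 0 < y) (hyx : y < x) :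
    ∃ l m : ℝ, chi r l m y = 0 ∧ psi r l m x = psi r l m y ∧
      l < r * (1 - r) * y ^ (r - 1) := by
  have hx0 : 0 < x := lt_trans hy hyx
  set D : ℝ → ℝ := fun u => u * (Real.log u - Real.log y) - (u - y) with hD
  set Nu : ℝ → ℝ := fun u => y ^ r + r * y ^ (r - 1) * (u - y) - u ^ r with hNu
  set c : ℝ := r * (1 - r) * y ^ (r - 1) with hc
  set M : ℝ → ℝ := fun u => c * D u - Nu u with hM
  have hDd : ∀ u : ℝ, 0 < u → HasDerivAt D (Real.log u - Real.log y) u := by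
    intro u hu
    have h1 : HasDerivAt (fun u : ℝ => u * Real.log u) (Real.log u + 1) u :=
      Real.hasDerivAt_mul_log hu.ne'
    have h2 : HasDerivAt (fun u : ℝ => u * Real.log y) (Real.log y) u := by
      simpa using (hasDerivAt_id u).mul_const (Real.log y)
    have h3 : HasDerivAt (fun u : ℝ => u - y) 1 u := (hasDerivAt_id u).sub_const y
    have := (h1.sub h2).sub h3
    have heq : (fun u : ℝ => u * Real.log u - u * Real.log y - (u - y)) = D := by
      funext u; simp only [hD]; ring
    replace this : HasDerivAt D (Real.log u + 1 - Real.log y - 1) u := by rw [← heq]; exact this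
    convert this using 1; ring
  have hNud : ∀ u : ℝ, 0 < u → HasDerivAt Nu (r * y ^ (r - 1) - r * u ^ (r - 1)) u := by
    intro u hu
    have h1 : HasDerivAt (fun u : ℝ => u ^ r) (r * u ^ (r - 1)) u :=
      Real.hasDerivAt_rpow_const (Or.inl hu.ne')
    have h2 : HasDerivAt (fun u : ℝ => y ^ r + r * y ^ (r - 1) * (u - y)) (r * y ^ (r - 1)) u := by
      simpa using (((hasDerivAt_id u).sub_const y).const_mul (r * y ^ (r - 1))).const_add (y ^ r)
    exact h2.sub h1
  have hMd : ∀ u : ℝ, 0 < u →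
      HasDerivAt M (c * (Real.log u - Real.log y) - (r * y ^ (r - 1) - r * u ^ (r - 1))) u :=
    fun u hu => ((hDd u hu).const_mul c).sub (hNud u hu)
  -- derivative positivity of M on (y, ∞)
  have hMpos : ∀ u : ℝ, y < u →
      0 < c * (Real.log u - Real.log y) - (r * y ^ (r - 1) - r * u ^ (r - 1)) := by
    intro u hu
    have hu0 : 0 < u := lt_trans hy hu
    have hs : 0 < Real.log u - Real.log y := sub_pos.mpr (Real.log_lt_log hy hu)
    set s : ℝ := Real.log u - Real.log y with hsdef
    have hexp : u ^ (r - 1) = y ^ (r - 1) * Real.exp ((r - 1) * s) := by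
      rw [Real.rpow_def_of_pos hu0, Real.rpow_def_of_pos hy, ← Real.exp_add]
      congr 1
      simp only [hsdef]; ring
    have hz : (0:ℝ) < (1 - r) * s := mul_pos (by linarith) hs
    have key : (-( (1 - r) * s)) + 1 < Real.exp (-((1 - r) * s)) :=
      Real.add_one_lt_exp (by linarith)
    have hyp : 0 < y ^ (r - 1) := Real.rpow_pos_of_pos hy _
    have hexp' : Real.exp ((r - 1) * s) = Real.exp (-((1 - r) * s)) := by ring_nf
    rw [hexp, hexp', hc]
    nlinarith [mul_pos hr hyp, mul_pos (mul_pos hr hyp) hz]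
  -- strict monotonicity of D, Nu, M on [y, x]
  have hmono : ∀ (f : ℝ → ℝ) (f' : ℝ → ℝ), (∀ u : ℝ, 0 < u → HasDerivAt f (f' u) u) →
      (∀ u : ℝ, y < u → u < x → 0 < f' u) → f y < f x := by
    intro f f' hd hp
    have : StrictMonoOn f (Set.Icc y x) := by
      apply strictMonoOn_of_deriv_pos (convex_Icc y x)
      · intro z hz
        exact (hd z (lt_of_lt_of_le hy hz.1)).continuousAt.continuousWithinAt
      · intro z hz
        rw [interior_Icc] at hz
        rw [(hd z (lt_trans hy hz.1)).deriv]
        exact hp z hz.1 hz.2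
    exact this (Set.mem_Icc.mpr ⟨le_refl y, hyx.le⟩) (Set.mem_Icc.mpr ⟨hyx.le, le_refl x⟩) hyx
  have hDy : D y = 0 := by simp [hD]
  have hNuy : Nu y = 0 := by simp [hNu]
  have hMy : M y = 0 := by simp [hM, hDy, hNuy]
  have hDpos : 0 < D x := by
    have := hmono D (fun u => Real.log u - Real.log y) hDd
      (fun u hu _ => sub_pos.mpr (Real.log_lt_log hy hu))
    rwa [hDy] at this
  have hNupos : 0 < Nu x := by
    have := hmono Nu (fun u => r * y ^ (r - 1) - r * u ^ (r - 1)) hNud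
      (fun u hu _ => by
        show 0 < r * y ^ (r - 1) - r * u ^ (r - 1)
        have := rpow_anti hr1 hy hu
        nlinarith)
    rwa [hNuy] at this
  have hMxpos : 0 < M x := by
    have := hmono M _ hMd (fun u hu _ => hMpos u hu)
    rwa [hMy] at this
  -- define l, m
    
  refine ⟨Nu x / D x, r * y ^ (r - 1) + (Nu x / D x) * (Real.log y + 1), ?_, ?_, ?_⟩
  · unfold chi; ring
  · have hl : (Nu x / D x) * D x = Nu x := div_mul_cancel₀ _ hDpos.ne'
    unfold psi
    have expand : x ^ r + Nu x / D x * (x * Real.log x) -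
        (r * y ^ (r - 1) + Nu x / D x * (Real.log y + 1)) * x -
        (y ^ r + Nu x / D x * (y * Real.log y) -
        (r * y ^ (r - 1) + Nu x / D x * (Real.log y + 1)) * y)
        = (Nu x / D x) * D x - Nu x := by
      simp only [hD, hNu]
      ring
    have := expand
    rw [hl] at this
    linarith [this]
  · rw [div_lt_iff₀ hDpos, hc]
    have : M x = c * D x - Nu x := rfl
    rw [hc] at this
    linarith [hMxpos, this.symm.le]
end EntAux4

namespace EntAux5
open EntAux

lemma sum_ite_fin (k : ℕ) (hk : 1 ≤ k) (a b : ℝ) :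
    ∑ i : Fin k, (if (i : ℕ) = 0 then a else b) = a + ((k : ℝ) - 1) * b := by
  obtain ⟨k', rfl⟩ : ∃ k', k = k' + 1 := ⟨k - 1, (Nat.succ_pred_eq_of_pos hk).symm⟩
  rw [Fin.sum_univ_succ]
  have h0 : ((0 : Fin (k' + 1)) : ℕ) = 0 := rfl
  rw [if_pos h0]
  have : ∀ i : Fin k', (if ((i.succ : Fin (k' + 1)) : ℕ) = 0 then a else b) = b := by
    intro i
    rw [if_neg]
    simp [Fin.val_succ]
  rw [Finset.sum_congr rfl (fun i _ => this i), Finset.sum_const, Finset.card_univ,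
    Fintype.card_fin, nsmul_eq_mul]
  push_cast
  ring

/-- Gibbs-type bound: entropy of a subvector is at most `s·log(n/s)`. -/
lemma gibbs {ι : Type*} (S : Finset ι) (c : ι → ℝ) (hc : ∀ j ∈ S, 0 ≤ c j)
    {s : ℝ} (hs : ∑ j ∈ S, c j = s) (hspos : 0 < s) (hScard : 0 < S.card) :
    -∑ j ∈ S, c j * Real.log (c j) ≤ s * (Real.log S.card - Real.log s) := by
  set n : ℕ := S.card with hn
  set b : ℝ := s / n with hb
  have hn0 : (0:ℝ) < n := by exact_mod_cast hScard
  have hbpos : 0 < b := div_pos hspos hn0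
  have key : ∀ j ∈ S, -(c j * Real.log (c j)) ≤ b - c j - c j * Real.log b := by
    intro j hj
    rcases eq_or_lt_of_le (hc j hj) with h0 | h0
    · rw [← h0]; simp; linarith
    · have hlog : Real.log (b / c j) ≤ b / c j - 1 :=
        Real.log_le_sub_one_of_pos (div_pos hbpos h0)
      rw [Real.log_div hbpos.ne' h0.ne'] at hlog
      have := mul_le_mul_of_nonneg_left hlog (hc j hj)
      rw [mul_sub, mul_sub] at this
      have hcb : c j * (b / c j) = b := by field_simp
      rw [hcb] at this
      linarith
  have hsum : ∑ j ∈ S, -(c j * Real.log (c j)) ≤ ∑ j ∈ S, (b - c j - c j * Real.log b) :=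
    Finset.sum_le_sum key
  rw [Finset.sum_neg_distrib] at hsum
  have hrhs : ∑ j ∈ S, (b - c j - c j * Real.log b) = n * b - s - s * Real.log b := by
    rw [Finset.sum_sub_distrib, Finset.sum_sub_distrib, Finset.sum_const, ← Finset.sum_mul, hs,
      nsmul_eq_mul]
  have hnb : (n:ℝ) * b = s := by
    rw [hb]; field_simp
  rw [hrhs, hnb] at hsum
  have hlogb : Real.log b = Real.log s - Real.log n := Real.log_div hspos.ne' hn0.ne'
  rw [hlogb] at hsum
  calc -∑ j ∈ S, c j * Real.log (c j) ≤ s - s - s * (Real.log s - Real.log n) := hsum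
    _ = s * (Real.log n - Real.log s) := by ring

lemma sumQ (k : ℕ) (hk : 1 ≤ k) (x : ℝ) (f : ℝ → ℝ) :
    ∑ i : Fin k, f (Qdist k x i) = f x + ((k : ℝ) - 1) * f ((1 - x) / ((k : ℝ) - 1)) := by
  have : ∀ i : Fin k, f (Qdist k x i) =
      (if (i : ℕ) = 0 then f x else f ((1 - x) / ((k : ℝ) - 1))) := by
    intro i
    unfold Qdist
    split <;> rfl
  rw [Finset.sum_congr rfl (fun i _ => this i), sum_ite_fin k hk]

end EntAux5

namespace EntAux6
open EntAux EntAux5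

noncomputable def W (k : ℕ) (t : ℝ) : ℝ :=
  -(t * Real.log t) - ((1 - t) * Real.log (1 - t)) + (1 - t) * Real.log ((k:ℝ) - 1)

lemma kR_pos {k : ℕ} (hk : 2 ≤ k) : (0:ℝ) < (k:ℝ) - 1 := by
  have : (2:ℝ) ≤ (k:ℝ) := by exact_mod_cast hk
  linarith

lemma entQ_eq_W (k : ℕ) (hk : 2 ≤ k) {x : ℝ} (hx1 : x < 1) :
    shannonEnt k (Qdist k x) = W k x := by
  have hkR : (0:ℝ) < (k:ℝ) - 1 := kR_pos hk
  unfold shannonEnt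
  rw [sumQ k (le_trans (by norm_num) hk) x (fun t => t * Real.log t)]
  have hy0 : 0 < (1 - x) / ((k:ℝ) - 1) := div_pos (by linarith) hkR
  have hky : ((k:ℝ) - 1) * ((1 - x) / ((k:ℝ) - 1)) = 1 - x := by field_simp
  have hlogy : Real.log ((1 - x) / ((k:ℝ) - 1)) = Real.log (1 - x) - Real.log ((k:ℝ)-1) :=
    Real.log_div (by linarith) hkR.ne'
  unfold W
  rw [hlogy]
  have expand : ((k:ℝ) - 1) * ((1 - x) / ((k:ℝ) - 1) * (Real.log (1 - x) - Real.log ((k:ℝ) - 1)))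
      = (1 - x) * (Real.log (1 - x) - Real.log ((k:ℝ) - 1)) := by
    rw [← mul_assoc, hky]
  rw [expand]
  ring

lemma Wpos (k : ℕ) (hk : 2 ≤ k) {x : ℝ} (hx0 : 0 < x) (hx1 : x < 1) : 0 < W k x := by
  have h1 : Real.log x < 0 := Real.log_neg hx0 hx1
  have h2 : Real.log (1 - x) < 0 := Real.log_neg (by linarith) (by linarith)
  have h3 : 0 ≤ Real.log ((k:ℝ) - 1) := by
    apply Real.log_nonneg
    have : (2:ℝ) ≤ (k:ℝ) := by exact_mod_cast hk
    linarith
  unfold W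
  nlinarith [mul_pos hx0 (neg_pos.mpr h1), mul_pos (by linarith : (0:ℝ) < 1 - x) (neg_pos.mpr h2),
    mul_nonneg (by linarith : (0:ℝ) ≤ 1 - x) h3]

lemma hasDerivAt_W (k : ℕ) {t : ℝ} (ht0 : 0 < t) (ht1 : t < 1) :
    HasDerivAt (W k) (Real.log (1 - t) - Real.log t - Real.log ((k:ℝ) - 1)) t := by
  have h1 : HasDerivAt (fun t : ℝ => t * Real.log t) (Real.log t + 1) t :=
    Real.hasDerivAt_mul_log ht0.ne'
  have hin : HasDerivAt (fun t : ℝ => 1 - t) (-1) t := by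
    exact ((hasDerivAt_const t (1:ℝ)).sub (hasDerivAt_id t)).congr_deriv (by ring)
  have h2 : HasDerivAt (fun t : ℝ => (1 - t) * Real.log (1 - t))
      ((Real.log (1 - t) + 1) * (-1)) t :=
    (Real.hasDerivAt_mul_log (by linarith : (1:ℝ) - t ≠ 0)).comp t hin
  have h3 : HasDerivAt (fun t : ℝ => (1 - t) * Real.log ((k:ℝ) - 1))
      (-Real.log ((k:ℝ) - 1)) t := by
    simpa using hin.mul_const (Real.log ((k:ℝ) - 1))
  have := ((h1.neg).sub h2).add h3
  exact this.congr_deriv (by ring)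

lemma W_anti (k : ℕ) (hk : 2 ≤ k) {a b : ℝ} (ha : 1/(k:ℝ) ≤ a) (hb : b < 1) (hab : a < b) :
    W k b < W k a := by
  have hk0 : (0:ℝ) < k := by positivity
  have ha0 : 0 < a := lt_of_lt_of_le (by positivity) ha
  have hanti : StrictAntiOn (W k) (Set.Icc a b) := by
    apply strictAntiOn_of_deriv_neg (convex_Icc a b)
    · intro z hz
      exact (hasDerivAt_W k (lt_of_lt_of_le ha0 hz.1) (lt_of_le_of_lt hz.2 hb)).continuousAt.continuousWithinAt
    · intro z hz
      rw [interior_Icc] at hz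
      have hz0 : 0 < z := lt_trans ha0 hz.1
      have hz1 : z < 1 := lt_trans hz.2 hb
      rw [(hasDerivAt_W k hz0 hz1).deriv]
      have hkz : 1 < (k:ℝ) * z := by
        have : 1/(k:ℝ) < z := lt_of_le_of_lt ha hz.1
        calc (1:ℝ) = (k:ℝ) * (1/(k:ℝ)) := by field_simp
          _ < (k:ℝ) * z := by exact (mul_lt_mul_iff_right₀ hk0).mpr this
      have hlt : 1 - z < z * ((k:ℝ) - 1) := by nlinarith
      have := Real.log_lt_log (by linarith : (0:ℝ) < 1 - z) hlt
      rw [Real.log_mul hz0.ne' (kR_pos hk).ne'] at this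
      linarith
  exact hanti (Set.mem_Icc.mpr ⟨le_refl a, hab.le⟩) (Set.mem_Icc.mpr ⟨hab.le, le_refl b⟩) hab

lemma P_le_x (k : ℕ) (hk : 2 ≤ k) {x : ℝ} (hxk : 1/(k:ℝ) ≤ x) (hx1 : x < 1)
    (P : Fin k → ℝ) (hP0 : ∀ i, 0 ≤ P i) (hP1 : ∑ i, P i = 1)
    (hH : shannonEnt k P = shannonEnt k (Qdist k x)) :
    ∀ i, P i ≤ x := by
  have hx0 : 0 < x := lt_of_lt_of_le (by positivity) hxk
  by_contra hcon
  push_neg at hcon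
  obtain ⟨i, hpx⟩ := hcon
  have hiu : i ∈ Finset.univ := Finset.mem_univ i
  have hPi1 : P i ≤ 1 := by
    rw [← hP1]
    exact Finset.single_le_sum (fun j _ => hP0 j) hiu
  have hsplit : P i + ∑ j ∈ Finset.univ.erase i, P j = 1 := by
    rw [Finset.add_sum_erase Finset.univ P hiu]; exact hP1
  have hsplitlog : shannonEnt k P =
      -(P i * Real.log (P i)) - ∑ j ∈ Finset.univ.erase i, P j * Real.log (P j) := by
    unfold shannonEnt
    rw [← Finset.add_sum_erase Finset.univ (fun j => P j * Real.log (P j)) hiu]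
    ring
  rcases eq_or_lt_of_le hPi1 with h1 | h1
  · -- P i = 1 : entropy is 0, but W k x > 0
    have hz : ∀ j ∈ Finset.univ.erase i, P j = 0 := by
      have hs0 : ∑ j ∈ Finset.univ.erase i, P j = 0 := by rw [← h1] at hsplit; linarith
      exact fun j hj => (Finset.sum_eq_zero_iff_of_nonneg (fun j _ => hP0 j)).mp hs0 j hj
    have hent0 : shannonEnt k P = 0 := by
      rw [hsplitlog, h1]
      have : ∑ j ∈ Finset.univ.erase i, P j * Real.log (P j) = 0 :=
        Finset.sum_eq_zero (fun j hj => by rw [hz j hj]; ring)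
      rw [this]
      simp
    rw [hent0, entQ_eq_W k hk hx1] at hH
    exact absurd hH.symm (ne_of_gt (Wpos k hk hx0 hx1))
  · -- x < P i < 1
    set p := P i with hp
    have hppos : 0 < p := lt_trans hx0 hpx
    have hs : ∑ j ∈ Finset.univ.erase i, P j = 1 - p := by linarith
    have hcard : (Finset.univ.erase i).card = k - 1 := by
      rw [Finset.card_erase_of_mem hiu, Finset.card_univ, Fintype.card_fin]
    have hcardpos : 0 < (Finset.univ.erase i).card := by
      rw [hcard]; omega
    have hgibbs := gibbs (Finset.univ.erase i) P (fun j _ => hP0 j) hs (by linarith) hcardpos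
    have hcast : ((Finset.univ.erase i).card : ℝ) = (k:ℝ) - 1 := by
      rw [hcard]
      have : (1:ℕ) ≤ k := by omega
      push_cast [Nat.cast_sub this]
      ring
    rw [hcast] at hgibbs
    have hWle : shannonEnt k P ≤ W k p := by
      rw [hsplitlog]
      unfold W
      have : -∑ j ∈ Finset.univ.erase i, P j * Real.log (P j)
          ≤ (1 - p) * (Real.log ((k:ℝ) - 1) - Real.log (1 - p)) := hgibbs
      nlinarith [this]
    have hWlt : W k p < W k x := W_anti k hk hxk h1 hpx
    rw [hH, entQ_eq_W k hk hx1] at hWle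
    linarith

end EntAux6

namespace EntMain
open EntAux EntAux2 EntAux3 EntAux4 EntAux5 EntAux6

lemma perm_of_shape (k : ℕ) (hk : 2 ≤ k) (x : ℝ) (P : Fin k → ℝ) (i₀ : Fin k)
    (h1 : P i₀ = x) (h2 : ∀ j, j ≠ i₀ → P j = (1 - x) / ((k:ℝ) - 1)) :
    ∃ σ : Equiv.Perm (Fin k), P = Qdist k x ∘ σ := by
  haveI : NeZero k := ⟨by omega⟩
  refine ⟨Equiv.swap i₀ 0, ?_⟩
  funext j
  simp only [Function.comp_apply]
  unfold Qdist
  rcases eq_or_ne j i₀ with rfl | hj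
  · rw [Equiv.swap_apply_left, if_pos (Fin.val_zero k)]
    exact h1
  · have hne : Equiv.swap i₀ 0 j ≠ 0 := by
      intro h
      exact hj (Equiv.injective _ (h.trans (Equiv.swap_apply_left i₀ 0).symm))
    have hvne : ¬ ((((Equiv.swap i₀ 0) j : Fin k)) : ℕ) = 0 := by
      exact fun h => hne (Fin.ext (h.trans (Fin.val_zero k).symm))
    rw [if_neg hvne]
    exact h2 j hj

theorem main (k : ℕ) (hk : 2 ≤ k) (r : ℝ) (hr : r ∈ Set.Ioo (0 : ℝ) 1)
    (x : ℝ) (hx : x ∈ Set.Icc (1 / (k : ℝ)) 1)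
    (P : Fin k → ℝ) (hP0 : ∀ i, 0 ≤ P i) (hP1 : ∑ i, P i = 1)
    (hH : shannonEnt k P = shannonEnt k (Qdist k x)) :
    (∑ i, P i ^ r ≤ x ^ r + ((k : ℝ) - 1) * ((1 - x) / ((k : ℝ) - 1)) ^ r) ∧
    (∑ i, P i ^ r = x ^ r + ((k : ℝ) - 1) * ((1 - x) / ((k : ℝ) - 1)) ^ r →
      ∃ σ : Equiv.Perm (Fin k), P = Qdist k x ∘ σ) := by
  classical
  obtain ⟨hr0, hr1⟩ := hr
  obtain ⟨hxk, hx1⟩ := hx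
  have hkR : (0:ℝ) < (k:ℝ) - 1 := kR_pos hk
  have hk0 : (0:ℝ) < (k:ℝ) := by positivity
  have hk1 : (1:ℕ) ≤ k := by omega
  rcases eq_or_lt_of_le hx1 with hx1' | hx1'
  · -- Case x = 1
    subst hx1'
    have hy0 : (1 - 1) / ((k:ℝ) - 1) = 0 := by simp
    -- entropy of Qdist k 1 is 0
    have hQ0 : shannonEnt k (Qdist k 1) = 0 := by
      unfold shannonEnt
      rw [sumQ k hk1 1 (fun t => t * Real.log t), hy0]
      simp
    rw [hQ0] at hH
    have hPle1 : ∀ i, P i ≤ 1 := by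
      intro i
      rw [← hP1]
      exact Finset.single_le_sum (fun j _ => hP0 j) (Finset.mem_univ i)
    have hterm : ∀ i ∈ Finset.univ, (0:ℝ) ≤ -(P i * Real.log (P i)) := by
      intro i _
      rcases eq_or_lt_of_le (hP0 i) with h0 | h0
      · rw [← h0]; simp
      · have : Real.log (P i) ≤ 0 := Real.log_nonpos (hP0 i) (hPle1 i)
        nlinarith
    have hzero : ∀ i ∈ Finset.univ, -(P i * Real.log (P i)) = 0 := by
      apply (Finset.sum_eq_zero_iff_of_nonneg hterm).mp
      unfold shannonEnt at hH
      rw [Finset.sum_neg_distrib]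
      linarith [hH]
    have hval : ∀ i, P i = 0 ∨ P i = 1 := by
      intro i
      have h := hzero i (Finset.mem_univ i)
      have h' : P i * Real.log (P i) = 0 := by linarith
      rcases mul_eq_zero.mp h' with h | h
      · exact Or.inl h
      · rcases Real.log_eq_zero.mp h with h | h | h
        · exact Or.inl h
        · exact Or.inr h
        · exact absurd h (by linarith [hP0 i] : P i ≠ -1)
    set S := Finset.univ.filter (fun j => P j = 1) with hS
    have hcardS : (S.card : ℝ) = 1 := by
      have : ∑ j ∈ S, P j + ∑ j ∈ Finset.univ.filter (fun j => ¬ (P j = 1)), P j = 1 := by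
        rw [Finset.sum_filter_add_sum_filter_not]; exact hP1
      have h1 : ∑ j ∈ S, P j = S.card := by
        rw [Finset.sum_congr rfl (fun j hj => (Finset.mem_filter.mp hj).2)]
        simp; rfl
      have h2 : ∑ j ∈ Finset.univ.filter (fun j => ¬ (P j = 1)), P j = 0 := by
        apply Finset.sum_eq_zero
        intro j hj
        rcases hval j with h | h
        · exact h
        · exact absurd h (Finset.mem_filter.mp hj).2
      rw [h1, h2] at this
      linarith
    have hcard1 : S.card = 1 := by exact_mod_cast hcardS
    obtain ⟨i₀, hi₀⟩ := Finset.card_eq_one.mp hcard1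
    have hPi₀ : P i₀ = 1 := by
      have : i₀ ∈ S := hi₀ ▸ Finset.mem_singleton_self i₀
      exact (Finset.mem_filter.mp this).2
    have hPj : ∀ j, j ≠ i₀ → P j = 0 := by
      intro j hj
      rcases hval j with h | h
      · exact h
      · exfalso
        have : j ∈ S := Finset.mem_filter.mpr ⟨Finset.mem_univ j, h⟩
        rw [hi₀, Finset.mem_singleton] at this
        exact hj this
    have hsum : ∑ i, P i ^ r = 1 := by
      rw [← Finset.add_sum_erase Finset.univ (fun i => P i ^ r) (Finset.mem_univ i₀)]
      have h1 : P i₀ ^ r = 1 := by rw [hPi₀, Real.one_rpow]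
      have h2 : ∑ j ∈ Finset.univ.erase i₀, P j ^ r = 0 := by
        apply Finset.sum_eq_zero
        intro j hj
        rw [hPj j (Finset.ne_of_mem_erase hj), Real.zero_rpow hr0.ne']
      rw [h1, h2]; ring
    have hrhs : (1:ℝ) ^ r + ((k : ℝ) - 1) * ((1 - 1) / ((k : ℝ) - 1)) ^ r = 1 := by
      rw [hy0, Real.one_rpow, Real.zero_rpow hr0.ne']
      ring
    constructor
    · rw [hsum, hrhs]
    · intro _
      apply perm_of_shape k hk 1 P i₀ hPi₀
      intro j hj
      rw [hPj j hj, hy0]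
  rcases eq_or_lt_of_le hxk with hxk' | hxk'
  · -- Case x = 1/k
    have hyx : (1 - x) / ((k:ℝ) - 1) = x := by
      rw [← hxk']
      field_simp
    have hPle : ∀ i, P i ≤ x := P_le_x k hk hxk hx1' P hP0 hP1 hH
    have hall : ∀ i, P i = x := by
      by_contra hcon
      push_neg at hcon
      obtain ⟨j, hj⟩ := hcon
      have : ∑ i, P i < ∑ _i : Fin k, x :=
        Finset.sum_lt_sum (fun i _ => hPle i) ⟨j, Finset.mem_univ j, lt_of_le_of_ne (hPle j) hj⟩
      rw [hP1, Finset.sum_const, Finset.card_univ, Fintype.card_fin, nsmul_eq_mul, ← hxk'] at this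
      have hkx : (k:ℝ) * (1/(k:ℝ)) = 1 := by field_simp
      rw [hkx] at this
      exact lt_irrefl _ this
    have hsum : ∑ i, P i ^ r = (k:ℝ) * x ^ r := by
      rw [Finset.sum_congr rfl (fun i _ => by rw [hall i])]
      rw [Finset.sum_const, Finset.card_univ, Fintype.card_fin, nsmul_eq_mul]
    have hrhs : x ^ r + ((k : ℝ) - 1) * ((1 - x) / ((k : ℝ) - 1)) ^ r = (k:ℝ) * x ^ r := by
      rw [hyx]; ring
    constructor
    · rw [hsum, hrhs]
    · intro _
      refine ⟨1, ?_⟩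
      funext j
      simp only [Function.comp_apply, Equiv.Perm.coe_one, id_eq]
      unfold Qdist
      split
      · exact hall j
      · rw [hall j, hyx]
  · -- Main case 1/k < x < 1
    set y := (1 - x) / ((k:ℝ) - 1) with hydef
    have hx0 : 0 < x := lt_trans (by positivity) hxk'
    have hy0 : 0 < y := div_pos (by linarith) hkR
    have hyx : y < x := by
      rw [hydef, div_lt_iff₀ hkR]
      have hkx : 1 < (k:ℝ) * x := by
        calc (1:ℝ) = (k:ℝ) * (1/(k:ℝ)) := by field_simp
          _ < (k:ℝ) * x := by exact (mul_lt_mul_iff_right₀ hk0).mpr hxk'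
      nlinarith
    obtain ⟨l, m, hchiy, heqpsi, hlA⟩ := exists_lm hr0 hr1 hy0 hyx
    obtain ⟨hypos, hle, hstrict⟩ := psi_bound hr0 hr1 hy0 hyx hchiy heqpsi hlA
    have hPx : ∀ i, P i ≤ x := P_le_x k hk hxk hx1' P hP0 hP1 hH
    -- expansions
    have hidP : ∀ t : ℝ, t ^ r = psi r l m t - l * (t * Real.log t) + m * t := by
      intro t; unfold psi; ring
    have hsumP : ∑ i, P i ^ r = ∑ i, psi r l m (P i) + l * shannonEnt k P + m := by
      rw [Finset.sum_congr rfl (fun i _ => hidP (P i))]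
      rw [Finset.sum_add_distrib, Finset.sum_sub_distrib, ← Finset.mul_sum, ← Finset.mul_sum,
        hP1, mul_one]
      unfold shannonEnt
      ring
    have hsumyQ : x + ((k:ℝ) - 1) * y = 1 := by
      rw [hydef]; field_simp; ring
    have hQent : shannonEnt k (Qdist k x) = -(x * Real.log x + ((k:ℝ)-1) * (y * Real.log y)) := by
      unfold shannonEnt
      rw [sumQ k hk1 x (fun t => t * Real.log t)]
    have hsumQ' : x ^ r + ((k : ℝ) - 1) * y ^ r
        = psi r l m x + ((k:ℝ)-1) * psi r l m y + l * shannonEnt k (Qdist k x) + m := by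
      rw [hidP x, hidP y, hQent]
      have : ((k:ℝ)-1) * (psi r l m y - l * (y * Real.log y) + m * y)
          = ((k:ℝ)-1) * psi r l m y - l * (((k:ℝ)-1) * (y * Real.log y)) + m * (((k:ℝ)-1) * y) := by
        ring
      rw [this]
      have h1 : m * x + m * (((k:ℝ)-1) * y) = m := by
        rw [← mul_add, hsumyQ, mul_one]
      nlinarith [h1]
    have hkpsi : psi r l m x + ((k:ℝ)-1) * psi r l m y = (k:ℝ) * psi r l m x := by
      rw [← heqpsi]; ring
    have hbound : ∑ i, psi r l m (P i) ≤ (k:ℝ) * psi r l m x := by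
      calc ∑ i, psi r l m (P i) ≤ ∑ _i : Fin k, psi r l m x :=
            Finset.sum_le_sum (fun i _ => hle (P i) (hP0 i) (hPx i))
        _ = (k:ℝ) * psi r l m x := by
            rw [Finset.sum_const, Finset.card_univ, Fintype.card_fin, nsmul_eq_mul]
    have hmain : ∑ i, P i ^ r ≤ x ^ r + ((k : ℝ) - 1) * y ^ r := by
      rw [hsumP, hsumQ', hH, hkpsi]
      linarith
    refine ⟨hmain, ?_⟩
    intro hEq
    -- equality case
    have hsumpsi : ∑ i, psi r l m (P i) = (k:ℝ) * psi r l m x := by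
      rw [hsumP, hsumQ', hH, hkpsi] at hEq
      linarith
    have hallpsi : ∀ i, psi r l m (P i) = psi r l m x := by
      have hconst : ∑ _i : Fin k, psi r l m x = (k:ℝ) * psi r l m x := by
        rw [Finset.sum_const, Finset.card_univ, Fintype.card_fin, nsmul_eq_mul]
      have := (Finset.sum_eq_sum_iff_of_le
        (fun i (_ : i ∈ Finset.univ) => hle (P i) (hP0 i) (hPx i))).mp
        (by rw [hsumpsi, hconst])
      exact fun i => this i (Finset.mem_univ i)
    have hdichot : ∀ i, P i = x ∨ P i = y := by
      intro i
      by_contra hcon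
      push_neg at hcon
      exact absurd (hallpsi i) (ne_of_lt (hstrict (P i) (hP0 i) (hPx i) hcon.1 hcon.2))
    set S := Finset.univ.filter (fun j => P j = x) with hS
    have hsplit : ∑ j ∈ S, P j + ∑ j ∈ Finset.univ.filter (fun j => ¬ (P j = x)), P j = 1 := by
      rw [Finset.sum_filter_add_sum_filter_not]; exact hP1
    have h1 : ∑ j ∈ S, P j = (S.card : ℝ) * x := by
      rw [Finset.sum_congr rfl (fun j hj => (Finset.mem_filter.mp hj).2)]
      rw [Finset.sum_const, nsmul_eq_mul]
    have h2 : ∑ j ∈ Finset.univ.filter (fun j => ¬ (P j = x)), P j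
        = ((Finset.univ.filter (fun j => ¬ (P j = x))).card : ℝ) * y := by
      rw [Finset.sum_congr rfl (fun j hj => ?_), Finset.sum_const, nsmul_eq_mul]
      rcases hdichot j with h | h
      · exact absurd h (Finset.mem_filter.mp hj).2
      · exact h
    have hcards : S.card + (Finset.univ.filter (fun j => ¬ (P j = x))).card = k := by
      rw [Finset.card_filter_add_card_filter_not, Finset.card_univ, Fintype.card_fin]
    have hcardsR : (S.card : ℝ) + ((Finset.univ.filter (fun j => ¬ (P j = x))).card : ℝ) = (k:ℝ) := by
      exact_mod_cast hcards
    rw [h1, h2] at hsplit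
    have hxy : x - y ≠ 0 := by linarith
    have hsone : (S.card : ℝ) = 1 := by
      have hfac : ((S.card : ℝ) - 1) * (x - y) = 0 := by
        linear_combination hsplit - hsumyQ - y * hcardsR
      rcases mul_eq_zero.mp hfac with h | h
      · linarith
      · exact absurd h hxy
    have hcard1 : S.card = 1 := by exact_mod_cast hsone
    obtain ⟨i₀, hi₀⟩ := Finset.card_eq_one.mp hcard1
    have hPi₀ : P i₀ = x := by
      have : i₀ ∈ S := hi₀ ▸ Finset.mem_singleton_self i₀
      exact (Finset.mem_filter.mp this).2
    apply perm_of_shape k hk x P i₀ hPi₀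
    intro j hj
    rcases hdichot j with h | h
    · exfalso
      have : j ∈ S := Finset.mem_filter.mpr ⟨Finset.mem_univ j, h⟩
      rw [hi₀, Finset.mem_singleton] at this
      exact hj this
    · exact h
end EntMain


/-- Among all distributions of a given entropy, the two-valued distribution `Q_x`
maximizes `∑ p_i^r`, uniquely up to permutation. -/
theorem sum_rpow_le_of_entropy_eq (k : ℕ) (hk : 2 ≤ k) (r : ℝ) (hr : r ∈ Set.Ioo (0 : ℝ) 1)
    (x : ℝ) (hx : x ∈ Set.Icc (1 / (k : ℝ)) 1)
    (P : Fin k → ℝ) (hP0 : ∀ i, 0 ≤ P i) (hP1 : ∑ i, P i = 1)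
    (hH : shannonEnt k P = shannonEnt k (Qdist k x)) :
    (∑ i, P i ^ r ≤ x ^ r + ((k : ℝ) - 1) * ((1 - x) / ((k : ℝ) - 1)) ^ r) ∧
    (∑ i, P i ^ r = x ^ r + ((k : ℝ) - 1) * ((1 - x) / ((k : ℝ) - 1)) ^ r →
      ∃ σ : Equiv.Perm (Fin k), P = Qdist k x ∘ σ) := by
  exact EntMain.main k hk r hr x hx P hP0 hP1 hH
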